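/- Any two components of the single-link hierarchy are either disjoint or one contains the other (the hierarchy is laminar). -/

import Mathlib

/-- The single-link component of `x` at threshold `r`: the set of points
reachable from `x` through links of length at most `r`. Components of the
single-link hierarchy are exactly these sets (over all thresholds `r`). -/
def slComponent {V : Type*} (w : V → V → ℝ) (r : ℝ) (x : V) : Set V :=
  {z | Relation.EqvGen (fun a b => w a b ≤ r) x z}

private lemma sl_mono {V : Type*} (w : V → V → ℝ) {r r' : ℝ} (h : r ≤ r')
    {a b : V} (hab : Relation.EqvGen (fun a b => w a b ≤ r) a b) :
    Relation.EqvGen (fun a b => w a b ≤ r') a b :=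
  Relation.EqvGen.mono (fun _ _ hw => le_trans hw h) a b hab

private lemma sl_sub {V : Type*} (w : V → V → ℝ) {r r' : ℝ} (h : r ≤ r')
    {x y z : V} (hx : z ∈ slComponent w r x) (hy : z ∈ slComponent w r' y) :
    slComponent w r x ⊆ slComponent w r' y := by
  intro u hu
  exact Relation.EqvGen.trans _ _ _ hy
    (Relation.EqvGen.trans _ _ _ (Relation.EqvGen.symm _ _ (sl_mono w h hx))
      (sl_mono w h hu))

/-- The single-link hierarchy is laminar: any two of its components are
either nested or disjoint. -/
theorem stmt_9 {V : Type*} (w : V → V → ℝ) (hsymm : ∀ a b, w a b = w b a)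
    (r r' : ℝ) (x y : V) :
    slComponent w r x ⊆ slComponent w r' y ∨
    slComponent w r' y ⊆ slComponent w r x ∨
    Disjoint (slComponent w r x) (slComponent w r' y) := by
  by_cases hd : Disjoint (slComponent w r x) (slComponent w r' y)
  · exact Or.inr (Or.inr hd)
  · rw [Set.not_disjoint_iff] at hd
    obtain ⟨z, hx, hy⟩ := hd
    rcases le_total r r' with h | h
    · exact Or.inl (sl_sub w h hx hy)
    · exact Or.inr (Or.inl (sl_sub w h hy hx))
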